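/- Every full circulant polygon P_k^{k−1} with k ≥ 4 is star-shaped: there exists a point c ∈ P such that every point of P is visible from c, i.e., P ⊆ V(c) (equivalently, for every q ∈ P the segment from c to q lies in P). -/

import Mathlib

/-- Points of the Euclidean plane. -/
abbrev Pt := EuclideanSpace ℝ (Fin 2)

/-- Visibility region of `p` in `P`. -/
def Vis (P : Set Pt) (p : Pt) : Set Pt := {q ∈ P | segment ℝ p q ⊆ P}

/-- A polygonal region: a compact connected subset of the plane equal to the closure of
its interior, whose frontier is contained in finitely many closed segments. -/
def IsPolygonalRegion (P : Set Pt) : Prop :=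
  IsCompact P ∧ IsConnected P ∧ P = closure (interior P) ∧
  ∃ E : Finset (Pt × Pt), frontier P ⊆ ⋃ e ∈ E, segment ℝ e.1 e.2

/-- A full circulant polygon `P_k^{k-1}`: a polygonal region `P` with pairwise distinct
guards `g 0, …, g (k-1) ∈ P` and witnesses `w 0, …, w (k-1) ∈ P` such that
`V(g i) ∩ W = W \ {w i}` for all `i`, and every point of `P` sees at least `k - 1`
of the guards. -/
def IsFullCirculant (P : Set Pt) (k : ℕ) (g w : Fin k → Pt) : Prop :=
  IsPolygonalRegion P ∧
  Function.Injective g ∧ Function.Injective w ∧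
  (∀ i, g i ∈ P) ∧ (∀ i, w i ∈ P) ∧
  (∀ i, Vis P (g i) ∩ Set.range w = Set.range w \ {w i}) ∧
  (∀ p ∈ P, k - 1 ≤ (Vis P p ∩ Set.range g).ncard)

open Metric Set

lemma isClosed_vis {S : Set Pt} (hS : IsClosed S) (x : Pt) : IsClosed (Vis S x) := by
  have hrw : Vis S x = S ∩ ⋂ t ∈ Set.Icc (0:ℝ) 1, (fun q : Pt => (1 - t) • x + t • q) ⁻¹' S := by
    ext q
    simp only [Vis, Set.mem_setOf_eq, Set.mem_inter_iff, Set.mem_iInter, Set.mem_preimage]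
    constructor
    · rintro ⟨hq, hseg⟩
      exact ⟨hq, fun t ht => hseg (by rw [segment_eq_image]; exact ⟨t, ht, rfl⟩)⟩
    · rintro ⟨hq, hall⟩
      refine ⟨hq, ?_⟩
      rw [segment_eq_image]
      rintro p ⟨t, ht, rfl⟩
      exact hall t ht
  rw [hrw]
  refine hS.inter (isClosed_biInter fun t ht => hS.preimage ?_)
  exact continuous_const.add (continuous_id.const_smul t)

lemma self_mem_vis {S : Set Pt} {x : Pt} (hx : x ∈ S) : x ∈ Vis S x :=
  ⟨hx, by rw [segment_same]; simpa using hx⟩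

lemma halfspace {S : Set Pt} {q y : Pt} (hy : y ∈ S)
    (hnear : ∀ p ∈ S, dist q y ≤ dist q p) {v : Pt}
    (hv : v ∈ closure (convexHull ℝ (Vis S y))) :
    (inner ℝ (v - y) (q - y) : ℝ) ≤ 0 := by
  set C : Set Pt := {v : Pt | (inner ℝ (v - y) (q - y) : ℝ) ≤ 0} with hC
  have hCclosed : IsClosed C := by
    have hcont : Continuous fun v : Pt => (inner ℝ (v - y) (q - y) : ℝ) :=
      (continuous_id.sub continuous_const).inner continuous_const
    exact isClosed_le hcont continuous_const
  have hCconvex : Convex ℝ C := by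
    have hrw : C = {v : Pt | (inner ℝ (q - y) v : ℝ) ≤ (inner ℝ (q - y) y : ℝ)} := by
      ext u
      simp only [hC, Set.mem_setOf_eq]
      rw [real_inner_comm, inner_sub_right]
      constructor <;> intro h <;> linarith
    rw [hrw]
    exact convex_halfSpace_le ⟨fun a b => inner_add_right _ _ _,
      fun c a => real_inner_smul_right _ _ _⟩ _
  have hsub : Vis S y ⊆ C := by
    intro v hv'
    have hseg := hv'.2
    have key : ∀ t : ℝ, 0 < t → t ≤ 1 → (inner ℝ (v - y) (q - y) : ℝ) ≤ t / 2 * ‖v - y‖ ^ 2 := by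
      intro t ht0 ht1
      have hmem : (1 - t) • y + t • v ∈ S := by
        apply hseg
        exact ⟨1 - t, t, by linarith, by linarith, by ring, rfl⟩
      have hd : dist q y ≤ dist q ((1 - t) • y + t • v) := hnear _ hmem
      have hd2 : dist q y ^ 2 ≤ dist q ((1 - t) • y + t • v) ^ 2 :=
        pow_le_pow_left₀ dist_nonneg hd 2
      rw [dist_eq_norm, dist_eq_norm] at hd2
      have hq2 : q - ((1 - t) • y + t • v) = (q - y) - t • (v - y) := by
        module
      have hexp : ‖(q - y) - t • (v - y)‖ ^ 2
          = ‖q - y‖ ^ 2 - 2 * (t * (inner ℝ (q - y) (v - y) : ℝ)) + t ^ 2 * ‖v - y‖ ^ 2 := by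
        rw [norm_sub_sq_real, real_inner_smul_right, norm_smul, mul_pow, Real.norm_eq_abs, sq_abs]
      rw [hq2, hexp] at hd2
      have hip : 2 * t * (inner ℝ (q - y) (v - y) : ℝ) ≤ t ^ 2 * ‖v - y‖ ^ 2 := by linarith
      rw [real_inner_comm]
      nlinarith [hip]
    show (inner ℝ (v - y) (q - y) : ℝ) ≤ 0
    set ip := (inner ℝ (v - y) (q - y) : ℝ) with hipdef
    by_contra hpos
    push_neg at hpos
    rcases eq_or_ne (‖v - y‖) 0 with hz | hz
    · have h1 := key 1 one_pos le_rfl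
      rw [hz] at h1
      norm_num at h1
      linarith
    · have hN : 0 < ‖v - y‖ ^ 2 := by positivity
      set t : ℝ := min 1 (ip / ‖v - y‖ ^ 2) with htdef
      have ht0 : 0 < t := lt_min one_pos (by positivity)
      have ht1 : t ≤ 1 := min_le_left _ _
      have hk2 := key t ht0 ht1
      have htle : t ≤ ip / ‖v - y‖ ^ 2 := min_le_right _ _
      have hcon : ip ≤ ip / 2 := by
        calc ip ≤ t / 2 * ‖v - y‖ ^ 2 := hk2
        _ ≤ (ip / ‖v - y‖ ^ 2) / 2 * ‖v - y‖ ^ 2 := by nlinarith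
        _ = ip / 2 := by field_simp
      linarith
  exact closure_minimal (convexHull_min hsub hCconvex) hCclosed hv

/-- The key one-step inequality along the segment from `c`. -/
lemma step_ineq {S : Set Pt} (hScomp : IsCompact S) (hne : S.Nonempty) {c z : Pt}
    (hKEY : ∀ p : Pt, p ∉ S → ∀ y ∈ S, (∀ u ∈ S, dist p y ≤ dist p u) →
      (inner ℝ (c - y) (p - y) : ℝ) ≤ 0)
    {t s : ℝ} (ht : 0 < t) (hts : t < s) (hout : c + s • (z - c) ∉ S) :
    infDist (c + t • (z - c)) S ^ 2 / t ^ 2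
      ≤ infDist (c + s • (z - c)) S ^ 2 / s ^ 2 + (s - t) ^ 2 * ‖z - c‖ ^ 2 / t ^ 2 := by
  obtain ⟨y, hyS, hyd⟩ := hScomp.exists_infDist_eq_dist hne (c + s • (z - c))
  set q' : Pt := c + s • (z - c) with hq'
  set qt : Pt := c + t • (z - c) with hqt
  have hnear : ∀ u ∈ S, dist q' y ≤ dist q' u := fun u hu => hyd ▸ infDist_le_dist_of_mem hu
  have h1 : (inner ℝ (c - y) (q' - y) : ℝ) ≤ 0 := hKEY q' hout y hyS hnear
  set r : ℝ := dist q' y with hr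
  set L : ℝ := ‖z - c‖ with hL
  set ip : ℝ := (inner ℝ (q' - y) (z - c) : ℝ) with hip
  have hcy : c - y = (q' - y) - s • (z - c) := by rw [hq']; module
  have h2 : r ^ 2 ≤ s * ip := by
    rw [hcy, inner_sub_left, real_inner_smul_left, real_inner_self_eq_norm_sq] at h1
    have : ‖q' - y‖ = r := by rw [hr, dist_eq_norm]
    rw [this] at h1
    rw [real_inner_comm] at h1
    linarith
  have hqty : qt - y = (q' - y) - (s - t) • (z - c) := by rw [hq', hqt]; module
  have hexp : ‖qt - y‖ ^ 2 = r ^ 2 - 2 * ((s - t) * ip) + (s - t) ^ 2 * L ^ 2 := by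
    rw [hqty, norm_sub_sq_real, real_inner_smul_right, norm_smul, mul_pow,
      Real.norm_eq_abs, sq_abs]
    rw [show ‖q' - y‖ = r by rw [hr, dist_eq_norm]]
  have h5 : infDist qt S ^ 2 ≤ r ^ 2 - 2 * ((s - t) * ip) + (s - t) ^ 2 * L ^ 2 := by
    rw [← hexp]
    have hle : infDist qt S ≤ ‖qt - y‖ := by
      rw [← dist_eq_norm]; exact infDist_le_dist_of_mem hyS
    exact pow_le_pow_left₀ infDist_nonneg hle 2
  have hs : (0:ℝ) < s := ht.trans hts
  have hr0 : (0:ℝ) ≤ r := dist_nonneg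
  have key : infDist qt S ^ 2 * s ^ 2 ≤ r ^ 2 * t ^ 2 + (s - t) ^ 2 * L ^ 2 * s ^ 2 := by
    have e1 : infDist qt S ^ 2 * s ^ 2 ≤ (r ^ 2 - 2 * ((s - t) * ip) + (s - t) ^ 2 * L ^ 2) * s ^ 2 :=
      mul_le_mul_of_nonneg_right h5 (sq_nonneg s)
    have e2 : 2 * (s - t) * s * r ^ 2 ≤ 2 * (s - t) * s * (s * ip) :=
      mul_le_mul_of_nonneg_left h2 (by nlinarith)
    nlinarith [mul_nonneg (sq_nonneg r) (sq_nonneg (s - t))]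
  rw [div_add_div _ _ (by positivity : (s:ℝ) ^ 2 ≠ 0) (by positivity : (t:ℝ) ^ 2 ≠ 0),
    div_le_div_iff₀ (by positivity) (by positivity)]
  have hid : infDist (c + s • (z - c)) S = r := by rw [hr, hyd]
  rw [hid]
  nlinarith [key, sq_nonneg t, mul_pos ht ht]

set_option maxHeartbeats 1000000 in
lemma star_center {S : Set Pt} (hScomp : IsCompact S) (hne : S.Nonempty) {c : Pt}
    (hc : ∀ x ∈ S, c ∈ closure (convexHull ℝ (Vis S x))) :
    c ∈ S ∧ ∀ z ∈ S, segment ℝ c z ⊆ S := by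
  have hSclosed : IsClosed S := hScomp.isClosed
  have hKEY : ∀ p : Pt, p ∉ S → ∀ y ∈ S, (∀ u ∈ S, dist p y ≤ dist p u) →
      (inner ℝ (c - y) (p - y) : ℝ) ≤ 0 := fun p _ y hy hnear => halfspace hy hnear (hc y hy)
  have hcS : c ∈ S := by
    by_contra hcS
    obtain ⟨y, hyS, hyd⟩ := hScomp.exists_infDist_eq_dist hne c
    have hnear : ∀ u ∈ S, dist c y ≤ dist c u := fun u hu => hyd ▸ infDist_le_dist_of_mem hu
    have h0 := hKEY c hcS y hyS hnear
    rw [real_inner_self_eq_norm_sq] at h0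
    have hn0 : ‖c - y‖ = 0 := le_antisymm (by nlinarith [norm_nonneg (c - y)]) (norm_nonneg _)
    have : c = y := by
      have := norm_eq_zero.mp hn0
      rwa [sub_eq_zero] at this
    exact hcS (this ▸ hyS)
  refine ⟨hcS, fun z hz => ?_⟩
  by_contra hseg
  set L : ℝ := ‖z - c‖ with hL
  set pt : ℝ → Pt := fun u => c + u • (z - c) with hptdef
  have hpt_cont : Continuous pt := continuous_const.add (continuous_id.smul continuous_const)
  have hpt1 : pt 1 = z := by rw [hptdef]; simp
  obtain ⟨t₀, ht₀I, ht₀⟩ : ∃ u ∈ Set.Icc (0:ℝ) 1, pt u ∉ S := by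
    by_contra hall
    push_neg at hall
    apply hseg
    rw [segment_eq_image']
    rintro p ⟨u, hu, rfl⟩
    exact hall u hu
  have ht₀0 : 0 < t₀ := by
    rcases lt_or_eq_of_le ht₀I.1 with h | h
    · exact h
    · exact absurd (by rw [← h]; simpa [hptdef] using hcS) ht₀
  set A : Set ℝ := Set.Icc t₀ 1 ∩ pt ⁻¹' S with hA
  have hA_closed : IsClosed A := isClosed_Icc.inter (hSclosed.preimage hpt_cont)
  have h1A : (1:ℝ) ∈ A := ⟨⟨ht₀I.2, le_rfl⟩, by rw [Set.mem_preimage, hpt1]; exact hz⟩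
  have hbdd : BddBelow A := ⟨t₀, fun u hu => hu.1.1⟩
  set T := sInf A with hTdef
  have hTA : T ∈ A := hA_closed.csInf_mem ⟨1, h1A⟩ hbdd
  have hTS : pt T ∈ S := hTA.2
  have ht₀T : t₀ < T := by
    rcases lt_or_eq_of_le hTA.1.1 with h | h
    · exact h
    · exact absurd (h ▸ hTS) ht₀
  have hout : ∀ u, t₀ ≤ u → u < T → pt u ∉ S := by
    intro u h1 h2 hmem
    have : T ≤ u := csInf_le hbdd ⟨⟨h1, h2.le.trans hTA.1.2⟩, hmem⟩
    linarith
  have hg0 : 0 < infDist (pt t₀) S := (hSclosed.notMem_iff_infDist_pos hne).mp ht₀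
  have main : ∀ n : ℕ, 0 < n →
      infDist (pt t₀) S ^ 2 / t₀ ^ 2 ≤ (T - t₀) ^ 2 * L ^ 2 / t₀ ^ 2 / n := by
    intro n hn
    set Δ : ℝ := (T - t₀) / n with hΔdef
    have hnR : (0:ℝ) < n := Nat.cast_pos.mpr hn
    have hΔ0 : 0 < Δ := div_pos (by linarith) hnR
    have hnΔ : (n:ℝ) * Δ = T - t₀ := by rw [hΔdef]; field_simp
    have chain : ∀ i : ℕ, i ≤ n - 1 →
        infDist (pt t₀) S ^ 2 / t₀ ^ 2
          ≤ infDist (pt (t₀ + i * Δ)) S ^ 2 / (t₀ + i * Δ) ^ 2 + i * (Δ ^ 2 * L ^ 2 / t₀ ^ 2) := by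
      intro i
      induction i with
      | zero => intro _; norm_num
      | succ m ih =>
        intro hi
        have ihm := ih (le_trans (Nat.le_succ m) hi)
        have hmΔ : (0:ℝ) ≤ (m:ℝ) * Δ := mul_nonneg (Nat.cast_nonneg m) hΔ0.le
        have htm0 : 0 < t₀ + (m:ℝ) * Δ := by linarith
        have hlt : t₀ + (m:ℝ) * Δ < t₀ + ((m+1:ℕ):ℝ) * Δ := by push_cast; nlinarith
        have hm2 : m + 2 ≤ n := by omega
        have hm2R : (m:ℝ) + 2 ≤ (n:ℝ) := by exact_mod_cast hm2
        have hsuccT : t₀ + ((m+1:ℕ):ℝ) * Δ < T := by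
          push_cast
          nlinarith
        have hsucc0 : t₀ ≤ t₀ + ((m+1:ℕ):ℝ) * Δ := by
          have : (0:ℝ) ≤ ((m+1:ℕ):ℝ) * Δ := mul_nonneg (Nat.cast_nonneg _) hΔ0.le
          linarith
        have houts : c + (t₀ + ((m+1:ℕ):ℝ) * Δ) • (z - c) ∉ S :=
          hout _ hsucc0 hsuccT
        have hstep := step_ineq hScomp hne hKEY htm0 hlt houts
        have hdd : Δ ^ 2 * L ^ 2 / (t₀ + (m:ℝ) * Δ) ^ 2 ≤ Δ ^ 2 * L ^ 2 / t₀ ^ 2 := by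
          apply div_le_div_of_nonneg_left (by positivity) (by positivity)
          exact pow_le_pow_left₀ ht₀0.le (by linarith) 2
        have hsub : ((m+1:ℕ):ℝ) * Δ - (m:ℝ) * Δ = Δ := by push_cast; ring
        push_cast at ihm hstep hdd ⊢
        have hrw : t₀ + ((m:ℝ) + 1) * Δ - (t₀ + (m:ℝ) * Δ) = Δ := by ring
        rw [hrw] at hstep
        calc infDist (pt t₀) S ^ 2 / t₀ ^ 2
            ≤ infDist (pt (t₀ + (m:ℝ) * Δ)) S ^ 2 / (t₀ + (m:ℝ) * Δ) ^ 2
              + (m:ℝ) * (Δ ^ 2 * L ^ 2 / t₀ ^ 2) := ihm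
          _ ≤ (infDist (pt (t₀ + ((m:ℝ) + 1) * Δ)) S ^ 2 / (t₀ + ((m:ℝ) + 1) * Δ) ^ 2
              + Δ ^ 2 * L ^ 2 / (t₀ + (m:ℝ) * Δ) ^ 2) + (m:ℝ) * (Δ ^ 2 * L ^ 2 / t₀ ^ 2) := by
              linarith [hstep]
          _ ≤ infDist (pt (t₀ + ((m:ℝ) + 1) * Δ)) S ^ 2 / (t₀ + ((m:ℝ) + 1) * Δ) ^ 2
              + ((m:ℝ) + 1) * (Δ ^ 2 * L ^ 2 / t₀ ^ 2) := by linarith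
    have hlast := chain (n - 1) le_rfl
    have hcastn : ((n-1:ℕ):ℝ) = (n:ℝ) - 1 := by
      have h1 : 1 ≤ n := hn
      push_cast [h1]
      ring
    set tl : ℝ := t₀ + ((n-1:ℕ):ℝ) * Δ with htl
    have htlT : T - tl = Δ := by rw [htl, hcastn]; nlinarith [hnΔ]
    have htl0 : t₀ ≤ tl := by
      rw [htl]
      nlinarith [Nat.cast_nonneg (α := ℝ) (n-1), hΔ0.le]
    have hgl : infDist (pt tl) S ≤ Δ * L := by
      have hd : dist (pt tl) (pt T) = (T - tl) * L := by
        rw [hptdef, dist_eq_norm]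
        have hsb : (c + tl • (z - c)) - (c + T • (z - c)) = (tl - T) • (z - c) := by module
        rw [hsb, norm_smul, Real.norm_eq_abs, abs_of_nonpos (by linarith), hL]
        ring
      calc infDist (pt tl) S ≤ dist (pt tl) (pt T) := infDist_le_dist_of_mem hTS
        _ = (T - tl) * L := hd
        _ = Δ * L := by rw [htlT]
    have hl2 : infDist (pt tl) S ^ 2 / tl ^ 2 ≤ Δ ^ 2 * L ^ 2 / t₀ ^ 2 := by
      apply div_le_div₀ (by positivity) ?_ (by positivity) (pow_le_pow_left₀ ht₀0.le htl0 2)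
      calc infDist (pt tl) S ^ 2 ≤ (Δ * L) ^ 2 := pow_le_pow_left₀ infDist_nonneg hgl 2
        _ = Δ ^ 2 * L ^ 2 := by ring
    have hΔsq : (1 + ((n-1:ℕ):ℝ)) * (Δ ^ 2 * L ^ 2 / t₀ ^ 2) = (T - t₀) ^ 2 * L ^ 2 / t₀ ^ 2 / n := by
      rw [hcastn, hΔdef]
      field_simp
      ring
    calc infDist (pt t₀) S ^ 2 / t₀ ^ 2
        ≤ infDist (pt tl) S ^ 2 / tl ^ 2 + ((n-1:ℕ):ℝ) * (Δ ^ 2 * L ^ 2 / t₀ ^ 2) := hlast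
      _ ≤ (1 + ((n-1:ℕ):ℝ)) * (Δ ^ 2 * L ^ 2 / t₀ ^ 2) := by linarith
      _ = (T - t₀) ^ 2 * L ^ 2 / t₀ ^ 2 / n := hΔsq
  -- conclude the contradiction
  set β : ℝ := infDist (pt t₀) S ^ 2 / t₀ ^ 2 with hβ
  have hβ0 : 0 < β := by rw [hβ]; positivity
  set Cst : ℝ := (T - t₀) ^ 2 * L ^ 2 / t₀ ^ 2 with hCst
  obtain ⟨n, hngt⟩ := exists_nat_gt (Cst / β)
  have hn0 : 0 < n := by
    have hC0 : 0 ≤ Cst / β := div_nonneg (by positivity) hβ0.le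
    exact_mod_cast lt_of_le_of_lt hC0 hngt
  have h1 := main n hn0
  have hnR : (0:ℝ) < n := Nat.cast_pos.mpr hn0
  rw [div_lt_iff₀ hβ0] at hngt
  rw [le_div_iff₀ hnR] at h1
  nlinarith

lemma exists_common_guard {k : ℕ} (hk : 4 ≤ k) (g : Fin k → Pt) (hg : Function.Injective g)
    (P : Set Pt) (hsee : ∀ p ∈ P, k - 1 ≤ (Vis P p ∩ Set.range g).ncard)
    {ι : Type*} (I : Finset ι) (x : ι → Pt) (hx : ∀ i ∈ I, x i ∈ P) (hcard : I.card ≤ 3) :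
    ∃ j, ∀ i ∈ I, g j ∈ Vis P (x i) := by
  classical
  have hGfin : (Set.range g).Finite := Set.finite_range g
  have hGcard : (Set.range g).ncard = k := by
    rw [← Set.image_univ, Set.ncard_image_of_injective _ hg, Set.ncard_univ,
      Nat.card_eq_fintype_card, Fintype.card_fin]
  have hmiss : ∀ i ∈ I, (Set.range g \ Vis P (x i)).ncard ≤ 1 := by
    intro i hi
    have h1 := Set.ncard_inter_add_ncard_diff_eq_ncard (Set.range g) (Vis P (x i)) hGfin
    have h2 : k - 1 ≤ (Set.range g ∩ Vis P (x i)).ncard := by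
      rw [Set.inter_comm]; exact hsee _ (hx i hi)
    omega
  have hU : ∀ J : Finset ι, J ⊆ I → (⋃ i ∈ J, (Set.range g \ Vis P (x i))).ncard ≤ J.card := by
    intro J hJ
    induction J using Finset.induction_on with
    | empty => simp
    | @insert a J ha ih =>
      rw [Finset.set_biUnion_insert]
      refine le_trans (Set.ncard_union_le _ _) ?_
      rw [Finset.card_insert_of_notMem ha]
      have hbound := hmiss a (hJ (Finset.mem_insert_self a J))
      have := ih (fun b hb => hJ (Finset.mem_insert_of_mem hb))
      omega
  have hUI := hU I le_rfl
  have hUsub : (⋃ i ∈ I, (Set.range g \ Vis P (x i))) ⊆ Set.range g :=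
    Set.iUnion₂_subset fun i _ => Set.diff_subset
  have hnsub : ¬ Set.range g ⊆ (⋃ i ∈ I, (Set.range g \ Vis P (x i))) := by
    intro hcon
    have := Set.ncard_le_ncard hcon (hGfin.subset hUsub)
    omega
  obtain ⟨e, heG, heU⟩ := Set.not_subset.mp hnsub
  obtain ⟨j, rfl⟩ := heG
  refine ⟨j, fun i hi => ?_⟩
  by_contra hv
  exact heU (Set.mem_biUnion hi ⟨Set.mem_range_self j, hv⟩)

theorem fullCirculant_starShaped' (P : Set Pt) (k : ℕ) (hk : 4 ≤ k)
    (g : Fin k → Pt) (hcomp : IsCompact P) (hginj : Function.Injective g)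
    (hgP : ∀ i, g i ∈ P) (hsee : ∀ p ∈ P, k - 1 ≤ (Vis P p ∩ Set.range g).ncard) :
    ∃ c ∈ P, ∀ q ∈ P, segment ℝ c q ⊆ P := by
  have hne : P.Nonempty := ⟨g ⟨0, by omega⟩, hgP _⟩
  set F : P → Set Pt := fun x => closure (convexHull ℝ (Vis P x.1)) with hF
  have hconv : ∀ x, Convex ℝ (F x) := fun x => (convex_convexHull ℝ _).closure
  have hcompF : ∀ x, IsCompact (F x) := by
    intro x
    apply Bornology.IsBounded.isCompact_closure
    rw [isBounded_convexHull]
    exact hcomp.isBounded.subset fun q hq => hq.1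
  have hinter : ∀ I : Finset P, I.card ≤ Module.finrank ℝ Pt + 1 → (⋂ i ∈ I, F i).Nonempty := by
    intro I hI
    have hI3 : I.card ≤ 3 := by rw [finrank_euclideanSpace_fin] at hI; omega
    obtain ⟨j, hj⟩ := exists_common_guard hk g hginj P hsee I (fun x : P => x.1)
      (fun i _ => i.2) hI3
    exact ⟨g j, Set.mem_biInter fun i hi =>
      subset_closure (subset_convexHull ℝ _ (hj i hi))⟩
  obtain ⟨c, hc⟩ := Convex.helly_theorem_compact' hconv hcompF hinter
  have hc' : ∀ x ∈ P, c ∈ closure (convexHull ℝ (Vis P x)) := fun x hx =>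
    Set.mem_iInter.mp hc ⟨x, hx⟩
  obtain ⟨hcP, hstar⟩ := star_center hcomp hne hc'
  exact ⟨c, hcP, hstar⟩

/-- Every full circulant polygon `P_k^{k-1}` with `k ≥ 4` is
star-shaped: there is a point `c ∈ P` seeing all of `P`. -/
theorem fullCirculant_starShaped (P : Set Pt) (k : ℕ) (hk : 4 ≤ k)
    (g w : Fin k → Pt) (h : IsFullCirculant P k g w) :
    ∃ c ∈ P, ∀ q ∈ P, segment ℝ c q ⊆ P := by
  obtain ⟨⟨hcomp, -, -, -⟩, hginj, -, hgP, -, -, hsee⟩ := h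
  exact fullCirculant_starShaped' P k hk g hcomp hginj hgP hsee
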